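/- ψ₁(8/9) − ψ₁(5/9) + ψ₁(1/9) − ψ₁(4/9) = 8π²·cos(π/9), where ψ₁(x) = Σ_{n=0}^∞ 1/(n+x)². -/
import Mathlib

open Real

/-- The trigamma function `ψ₁(x) = Σ_{n≥0} 1/(n+x)²`. -/
noncomputable def trigamma (x : ℝ) : ℝ := ∑' n : ℕ, 1 / ((n : ℝ) + x)^2

namespace TrigammaNinth

noncomputable def E (m : ℕ) : ℝ := Real.cos (2 * π * m / 9)

noncomputable def dd : ℝ := Real.cos (2 * π / 9)

noncomputable def C (r : ℕ) : ℝ :=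
  if r = 1 ∨ r = 8 then 1 else if r = 4 ∨ r = 5 then -1 else 0

noncomputable def w (a : ℕ) : ℝ := E a - E (4 * a)

lemma hd : 4 * dd ^ 3 - 3 * dd = -(1/2) := by
  have h := Real.cos_three_mul (2 * π / 9)
  rw [show 3 * (2 * π / 9) = π - π / 3 by ring, Real.cos_pi_sub, Real.cos_pi_div_three] at h
  rw [dd]; linarith

lemma Emod (m : ℕ) : E m = E (m % 9) := by
  unfold E
  have h3 : (((m / 9 : ℕ) : ℤ) : ℝ) = ((m / 9 : ℕ) : ℝ) := Int.cast_natCast _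
  have h2 : (m : ℝ) = 9 * ((m / 9 : ℕ) : ℝ) + ((m % 9 : ℕ) : ℝ) := by
    exact_mod_cast (Nat.div_add_mod m 9).symm
  have h : (2 * π * m / 9 : ℝ) = 2 * π * (m % 9 : ℕ) / 9 + ((m / 9 : ℕ) : ℤ) * (2 * π) := by
    rw [h3, h2]; ring
  rw [h, Real.cos_add_int_mul_two_pi]

lemma Ev0 : E 0 = 1 := by norm_num [E]

lemma Ev1 : E 1 = dd := by norm_num [E, dd]

lemma Ev2 : E 2 = 2*dd^2 - 1 := by
  have h := Real.cos_two_mul (2 * π / 9)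
  rw [E, dd, show (2 * π * (2:ℕ) / 9 : ℝ) = 2 * (2 * π / 9) by push_cast; ring, h]

lemma Ev3 : E 3 = -(1/2) := by
  rw [E, show (2 * π * (3:ℕ) / 9 : ℝ) = π - π / 3 by push_cast; ring, Real.cos_pi_sub,
    Real.cos_pi_div_three]

lemma Ev4 : E 4 = -2*dd^2 - dd + 1 := by
  have h : E 4 = 2 * (E 2)^2 - 1 := by
    rw [E, E, show (2 * π * (4:ℕ) / 9 : ℝ) = 2 * (2 * π * (2:ℕ) / 9) by push_cast; ring]
    exact Real.cos_two_mul _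
  rw [h, Ev2]
  linear_combination (2*dd) * hd

lemma Ev5 : E 5 = -2*dd^2 - dd + 1 := by
  rw [E, show (2 * π * (5:ℕ) / 9 : ℝ) = 2 * π - 2 * π * (4:ℕ) / 9 by push_cast; ring,
    Real.cos_two_pi_sub, ← E, Ev4]

lemma Ev6 : E 6 = -(1/2) := by
  rw [E, show (2 * π * (6:ℕ) / 9 : ℝ) = 2 * π - 2 * π * (3:ℕ) / 9 by push_cast; ring,
    Real.cos_two_pi_sub, ← E, Ev3]

lemma Ev7 : E 7 = 2*dd^2 - 1 := by
  rw [E, show (2 * π * (7:ℕ) / 9 : ℝ) = 2 * π - 2 * π * (2:ℕ) / 9 by push_cast; ring,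
    Real.cos_two_pi_sub, ← E, Ev2]

lemma Ev8 : E 8 = dd := by
  rw [E, show (2 * π * (8:ℕ) / 9 : ℝ) = 2 * π - 2 * π * (1:ℕ) / 9 by push_cast; ring,
    Real.cos_two_pi_sub, ← E, Ev1]

lemma Ev9 : E 9 = 1 := by
  rw [Emod 9, show 9 % 9 = 0 by norm_num, Ev0]

lemma Ev10 : E 10 = dd := by
  rw [Emod 10, show 10 % 9 = 1 by norm_num, Ev1]

lemma Ev12 : E 12 = -(1/2) := by
  rw [Emod 12, show 12 % 9 = 3 by norm_num, Ev3]

lemma Ev14 : E 14 = -2*dd^2 - dd + 1 := by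
  rw [Emod 14, show 14 % 9 = 5 by norm_num, Ev5]

lemma Ev15 : E 15 = -(1/2) := by
  rw [Emod 15, show 15 % 9 = 6 by norm_num, Ev6]

lemma Ev16 : E 16 = 2*dd^2 - 1 := by
  rw [Emod 16, show 16 % 9 = 7 by norm_num, Ev7]

lemma Ev18 : E 18 = 1 := by
  rw [Emod 18, show 18 % 9 = 0 by norm_num, Ev0]

lemma Ev20 : E 20 = 2*dd^2 - 1 := by
  rw [Emod 20, show 20 % 9 = 2 by norm_num, Ev2]

lemma Ev21 : E 21 = -(1/2) := by
  rw [Emod 21, show 21 % 9 = 3 by norm_num, Ev3]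

lemma Ev24 : E 24 = -(1/2) := by
  rw [Emod 24, show 24 % 9 = 6 by norm_num, Ev6]

lemma Ev25 : E 25 = 2*dd^2 - 1 := by
  rw [Emod 25, show 25 % 9 = 7 by norm_num, Ev7]

lemma Ev28 : E 28 = dd := by
  rw [Emod 28, show 28 % 9 = 1 by norm_num, Ev1]

lemma Ev30 : E 30 = -(1/2) := by
  rw [Emod 30, show 30 % 9 = 3 by norm_num, Ev3]

lemma Ev32 : E 32 = -2*dd^2 - dd + 1 := by
  rw [Emod 32, show 32 % 9 = 5 by norm_num, Ev5]

lemma Ev35 : E 35 = dd := by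
  rw [Emod 35, show 35 % 9 = 8 by norm_num, Ev8]

lemma Ev36 : E 36 = 1 := by
  rw [Emod 36, show 36 % 9 = 0 by norm_num, Ev0]

lemma Ev40 : E 40 = -2*dd^2 - dd + 1 := by
  rw [Emod 40, show 40 % 9 = 4 by norm_num, Ev4]

lemma Ev42 : E 42 = -(1/2) := by
  rw [Emod 42, show 42 % 9 = 6 by norm_num, Ev6]

lemma Ev48 : E 48 = -(1/2) := by
  rw [Emod 48, show 48 % 9 = 3 by norm_num, Ev3]

lemma Ev49 : E 49 = -2*dd^2 - dd + 1 := by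
  rw [Emod 49, show 49 % 9 = 4 by norm_num, Ev4]

lemma Ev56 : E 56 = 2*dd^2 - 1 := by
  rw [Emod 56, show 56 % 9 = 2 by norm_num, Ev2]

lemma Ev64 : E 64 = dd := by
  rw [Emod 64, show 64 % 9 = 1 by norm_num, Ev1]

lemma key (r : ℕ) (hr : r < 9) :
    (∑ a ∈ Finset.range 9, w a * E (r * a)) = (9/2) * C r := by
  interval_cases r
  · norm_num [C]
    simp only [w, Finset.sum_range_succ, Finset.sum_range_zero, Nat.reduceMul, Nat.mul_zero,
      Nat.zero_mul, Nat.mul_one, Nat.one_mul, zero_add, Ev0, Ev1, Ev2, Ev3, Ev4, Ev5, Ev6, Ev7, Ev8, Ev9, Ev10, Ev12, Ev14, Ev15, Ev16, Ev18, Ev20, Ev21, Ev24, Ev25, Ev28, Ev30, Ev32, Ev35, Ev36, Ev40, Ev42, Ev48, Ev49, Ev56, Ev64]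
    linear_combination 0 * hd
  · norm_num [C]
    simp only [w, Finset.sum_range_succ, Finset.sum_range_zero, Nat.reduceMul, Nat.mul_zero,
      Nat.zero_mul, Nat.mul_one, Nat.one_mul, zero_add, Ev0, Ev1, Ev2, Ev3, Ev4, Ev5, Ev6, Ev7, Ev8, Ev9, Ev10, Ev12, Ev14, Ev15, Ev16, Ev18, Ev20, Ev21, Ev24, Ev25, Ev28, Ev30, Ev32, Ev35, Ev36, Ev40, Ev42, Ev48, Ev49, Ev56, Ev64]
    linear_combination (3 + 6*dd) * hd
  · norm_num [C]
    simp only [w, Finset.sum_range_succ, Finset.sum_range_zero, Nat.reduceMul, Nat.mul_zero,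
      Nat.zero_mul, Nat.mul_one, Nat.one_mul, zero_add, Ev0, Ev1, Ev2, Ev3, Ev4, Ev5, Ev6, Ev7, Ev8, Ev9, Ev10, Ev12, Ev14, Ev15, Ev16, Ev18, Ev20, Ev21, Ev24, Ev25, Ev28, Ev30, Ev32, Ev35, Ev36, Ev40, Ev42, Ev48, Ev49, Ev56, Ev64]
    linear_combination 0 * hd
  · norm_num [C]
    simp only [w, Finset.sum_range_succ, Finset.sum_range_zero, Nat.reduceMul, Nat.mul_zero,
      Nat.zero_mul, Nat.mul_one, Nat.one_mul, zero_add, Ev0, Ev1, Ev2, Ev3, Ev4, Ev5, Ev6, Ev7, Ev8, Ev9, Ev10, Ev12, Ev14, Ev15, Ev16, Ev18, Ev20, Ev21, Ev24, Ev25, Ev28, Ev30, Ev32, Ev35, Ev36, Ev40, Ev42, Ev48, Ev49, Ev56, Ev64]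
    linear_combination 0 * hd
  · norm_num [C]
    simp only [w, Finset.sum_range_succ, Finset.sum_range_zero, Nat.reduceMul, Nat.mul_zero,
      Nat.zero_mul, Nat.mul_one, Nat.one_mul, zero_add, Ev0, Ev1, Ev2, Ev3, Ev4, Ev5, Ev6, Ev7, Ev8, Ev9, Ev10, Ev12, Ev14, Ev15, Ev16, Ev18, Ev20, Ev21, Ev24, Ev25, Ev28, Ev30, Ev32, Ev35, Ev36, Ev40, Ev42, Ev48, Ev49, Ev56, Ev64]
    linear_combination (-3 - 6*dd) * hd
  · norm_num [C]
    simp only [w, Finset.sum_range_succ, Finset.sum_range_zero, Nat.reduceMul, Nat.mul_zero,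
      Nat.zero_mul, Nat.mul_one, Nat.one_mul, zero_add, Ev0, Ev1, Ev2, Ev3, Ev4, Ev5, Ev6, Ev7, Ev8, Ev9, Ev10, Ev12, Ev14, Ev15, Ev16, Ev18, Ev20, Ev21, Ev24, Ev25, Ev28, Ev30, Ev32, Ev35, Ev36, Ev40, Ev42, Ev48, Ev49, Ev56, Ev64]
    linear_combination (-3 - 6*dd) * hd
  · norm_num [C]
    simp only [w, Finset.sum_range_succ, Finset.sum_range_zero, Nat.reduceMul, Nat.mul_zero,
      Nat.zero_mul, Nat.mul_one, Nat.one_mul, zero_add, Ev0, Ev1, Ev2, Ev3, Ev4, Ev5, Ev6, Ev7, Ev8, Ev9, Ev10, Ev12, Ev14, Ev15, Ev16, Ev18, Ev20, Ev21, Ev24, Ev25, Ev28, Ev30, Ev32, Ev35, Ev36, Ev40, Ev42, Ev48, Ev49, Ev56, Ev64]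
    linear_combination 0 * hd
  · norm_num [C]
    simp only [w, Finset.sum_range_succ, Finset.sum_range_zero, Nat.reduceMul, Nat.mul_zero,
      Nat.zero_mul, Nat.mul_one, Nat.one_mul, zero_add, Ev0, Ev1, Ev2, Ev3, Ev4, Ev5, Ev6, Ev7, Ev8, Ev9, Ev10, Ev12, Ev14, Ev15, Ev16, Ev18, Ev20, Ev21, Ev24, Ev25, Ev28, Ev30, Ev32, Ev35, Ev36, Ev40, Ev42, Ev48, Ev49, Ev56, Ev64]
    linear_combination 0 * hd
  · norm_num [C]
    simp only [w, Finset.sum_range_succ, Finset.sum_range_zero, Nat.reduceMul, Nat.mul_zero,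
      Nat.zero_mul, Nat.mul_one, Nat.one_mul, zero_add, Ev0, Ev1, Ev2, Ev3, Ev4, Ev5, Ev6, Ev7, Ev8, Ev9, Ev10, Ev12, Ev14, Ev15, Ev16, Ev18, Ev20, Ev21, Ev24, Ev25, Ev28, Ev30, Ev32, Ev35, Ev36, Ev40, Ev42, Ev48, Ev49, Ev56, Ev64]
    linear_combination (3 + 6*dd) * hd

lemma hcospi9 : Real.cos (π / 9) = 2*dd^2 + dd - 1 := by
  have h : E 4 = -Real.cos (π / 9) := by
    rw [E, show (2 * π * (4:ℕ) / 9 : ℝ) = π - π / 9 by push_cast; ring, Real.cos_pi_sub]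
  have h2 := Ev4
  rw [h] at h2
  linarith

lemma bern2 (x : ℝ) :
    (Polynomial.map (algebraMap ℚ ℝ) (Polynomial.bernoulli 2)).eval x = x^2 - x + 1/6 := by
  simp_rw [Polynomial.bernoulli, Finset.sum_range_succ, Finset.sum_range_zero,
    Polynomial.map_add, Polynomial.map_zero, Polynomial.map_monomial, Polynomial.eval_add,
    Polynomial.eval_zero, Polynomial.eval_monomial, zero_add]
  rw [bernoulli_one, bernoulli_eq_bernoulli'_of_ne_one zero_ne_one, bernoulli'_zero,
    bernoulli_eq_bernoulli'_of_ne_one (by decide : 2 ≠ 1), bernoulli'_two]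
  simp only [eq_ratCast]
  simp only [Nat.choose]
  push_cast
  ring

lemma fourierB (a : ℕ) (ha : a < 9) :
    HasSum (fun n : ℕ => 1/(n:ℝ)^2 * E (n * a))
      (π^2 * (((a:ℝ)/9)^2 - (a:ℝ)/9 + 1/6)) := by
  have hx : (a:ℝ)/9 ∈ Set.Icc (0:ℝ) 1 := by
    constructor
    · positivity
    · rw [div_le_one (by norm_num)]
      have : (a:ℝ) ≤ 8 := by exact_mod_cast Nat.lt_succ_iff.mp ha
      linarith
  have h := hasSum_one_div_nat_pow_mul_cos (k := 1) one_ne_zero hx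
  have hfun : (fun n : ℕ => 1/(n:ℝ)^(2*1) * Real.cos (2 * π * n * ((a:ℝ)/9))) =
      fun n : ℕ => 1/(n:ℝ)^2 * E (n * a) := by
    funext n
    rw [E, mul_one]
    congr 2
    push_cast
    ring
  rw [hfun] at h
  have hval : ((-1:ℝ)) ^ (1 + 1) * (2 * π) ^ (2 * 1) / 2 / ((Nat.factorial (2 * 1) : ℕ) : ℝ) *
      Polynomial.eval ((a:ℝ) / 9) (Polynomial.map (algebraMap ℚ ℝ) (Polynomial.bernoulli (2 * 1))) =
      π^2 * (((a:ℝ)/9)^2 - (a:ℝ)/9 + 1/6) := by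
    rw [show ((2 * 1 : ℕ)) = 2 from rfl, bern2, show Nat.factorial 2 = 2 from rfl]
    push_cast
    ring
  rw [hval] at h
  exact h

lemma summable_aux (x : ℝ) (hx : 1/9 ≤ x) :
    Summable (fun m : ℕ => (1:ℝ)/((m:ℝ) + x)^2) := by
  have h0 : Summable (fun m : ℕ => (1:ℝ)/((m:ℝ)+1)^2) := by
    have h1 : Summable (fun n : ℕ => 1/(n:ℝ)^2) := summable_one_div_nat_pow.mpr one_lt_two
    refine ((summable_nat_add_iff 1).mpr h1).congr fun n => ?_
    push_cast
    ring_nf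
  refine Summable.of_nonneg_of_le (fun m => by positivity) (fun m => ?_) (h0.mul_left 81)
  have hm : (0:ℝ) ≤ (m:ℝ) := Nat.cast_nonneg m
  have h1 : ((m:ℝ)+1)/9 ≤ (m:ℝ) + x := by linarith
  have h2 : (1:ℝ)/((m:ℝ) + x)^2 ≤ 1/(((m:ℝ)+1)/9)^2 :=
    one_div_le_one_div_of_le (by positivity) (pow_le_pow_left₀ (by positivity) h1 2)
  calc (1:ℝ)/((m:ℝ) + x)^2 ≤ 1/(((m:ℝ)+1)/9)^2 := h2
    _ = 81 * (1/((m:ℝ)+1)^2) := by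
        rw [div_pow, one_div_div]
        ring

lemma htri (a : ℕ) (ha : 1 ≤ a) :
    HasSum (fun m : ℕ => (1:ℝ)/(((m * 9 + a : ℕ)):ℝ)^2) (trigamma ((a:ℝ)/9) / 81) := by
  have hx : (1:ℝ)/9 ≤ (a:ℝ)/9 := by
    gcongr
    exact_mod_cast ha
  have hs := summable_aux ((a:ℝ)/9) hx
  have h : HasSum (fun m : ℕ => (1:ℝ)/((m:ℝ) + (a:ℝ)/9)^2) (trigamma ((a:ℝ)/9)) := hs.hasSum
  have h81 := h.div_const 81
  have heq : (fun m : ℕ => (1:ℝ)/(((m * 9 + a : ℕ)):ℝ)^2) =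
      fun m : ℕ => ((1:ℝ)/((m:ℝ) + (a:ℝ)/9)^2) / 81 := by
    funext m
    have hc : (((m * 9 + a : ℕ)):ℝ) = 9 * ((m:ℝ) + (a:ℝ)/9) := by push_cast; ring
    rw [hc, div_div]
    congr 1
    ring
  rw [heq]
  exact h81

lemma hfib (j : ℕ) (hj : j < 9) :
    HasSum (fun m : ℕ => C ((m * 9 + j) % 9) * ((1:ℝ)/(((m * 9 + j : ℕ)):ℝ)^2))
      (C j * (trigamma ((j:ℝ)/9) / 81)) := by
  have hmod : ∀ m : ℕ, (m * 9 + j) % 9 = j := fun m => by omega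
  simp only [hmod]
  rcases Nat.eq_zero_or_pos j with h0 | h1
  · subst h0
    have hC : C 0 = 0 := by norm_num [C]
    rw [hC]
    simpa using hasSum_zero
  · exact (htri j h1).mul_left (C j)

end TrigammaNinth

open TrigammaNinth in
/-- `ψ₁(8/9) − ψ₁(5/9) + ψ₁(1/9) − ψ₁(4/9) = 8π²cos(π/9)`. -/
theorem trigamma_eval_cos_pi_ninth :
    trigamma (8/9) - trigamma (5/9) + trigamma (1/9) - trigamma (4/9) =
      8 * π^2 * Real.cos (π / 9) := by
  have H : HasSum
      (fun n : ℕ => ∑ a ∈ Finset.range 9, (2/9) * w a * (1/(n:ℝ)^2 * E (n * a)))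
      (∑ a ∈ Finset.range 9, (2/9) * w a * (π^2 * (((a:ℝ)/9)^2 - (a:ℝ)/9 + 1/6))) :=
    hasSum_sum fun a ha => (fourierB a (Finset.mem_range.mp ha)).mul_left _
  have hpt : (fun n : ℕ => ∑ a ∈ Finset.range 9, (2/9) * w a * (1/(n:ℝ)^2 * E (n * a))) =
      fun n : ℕ => C (n % 9) * (1/(n:ℝ)^2) := by
    funext n
    have hE : ∀ a : ℕ, E (n * a) = E ((n % 9) * a) := fun a => by
      rw [Emod (n * a), Emod ((n % 9) * a), Nat.mul_mod n a 9, Nat.mul_mod (n % 9) a 9,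
        Nat.mod_mod_of_dvd n (dvd_refl 9)]
    calc ∑ a ∈ Finset.range 9, (2/9) * w a * (1/(n:ℝ)^2 * E (n * a))
        = ((2/9) * (1/(n:ℝ)^2)) * ∑ a ∈ Finset.range 9, w a * E ((n % 9) * a) := by
          rw [Finset.mul_sum]
          exact Finset.sum_congr rfl fun a _ => by rw [hE a]; ring
      _ = C (n % 9) * (1/(n:ℝ)^2) := by
          rw [key (n % 9) (Nat.mod_lt n (by norm_num))]
          ring
  have hB : (∑ a ∈ Finset.range 9, (2/9) * w a * (π^2 * (((a:ℝ)/9)^2 - (a:ℝ)/9 + 1/6)))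
      = π^2 * Real.cos (π / 9) * (8/81) := by
    simp only [Finset.sum_range_succ, Finset.sum_range_zero, w, Nat.reduceMul, Nat.mul_zero,
      zero_add, Ev0, Ev1, Ev2, Ev3, Ev4, Ev5, Ev6, Ev7, Ev8, Ev9, Ev10, Ev12, Ev14, Ev15, Ev16, Ev18, Ev20, Ev21, Ev24, Ev25, Ev28, Ev30, Ev32, Ev35, Ev36, Ev40, Ev42, Ev48, Ev49, Ev56, Ev64]
    rw [hcospi9]
    push_cast
    ring
  rw [hpt, hB] at H
  have H2 := (((Nat.divModEquiv 9).trans (Equiv.prodComm ℕ (Fin 9))).symm.hasSum_iff).mpr H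
  have H3 : HasSum (fun j : Fin 9 => C (j:ℕ) * (trigamma (((j:ℕ):ℝ)/9) / 81))
      (π^2 * Real.cos (π / 9) * (8/81)) :=
    H2.prod_fiberwise fun j => hfib (j:ℕ) j.isLt
  have hV := (hasSum_fintype
      (fun j : Fin 9 => C (j:ℕ) * (trigamma (((j:ℕ):ℝ)/9) / 81))).unique H3
  rw [Fin.sum_univ_eq_sum_range (fun j : ℕ => C j * (trigamma ((j:ℝ)/9) / 81)) 9] at hV
  simp only [Finset.sum_range_succ, Finset.sum_range_zero] at hV
  norm_num [C] at hV
  linarith
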